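/- With the Wolfe sets P_γ(ε, L) as defined, for any ordinals γ and η and any set L of measures: {l : (l,G) ∈ P_{γ+η}(ε,L) for some G} ⊆ ({l : (l,G) ∈ P_γ(ε,L) for some G})^{(η)}, where the superscript (η) denotes the η-th derived set with respect to the weak* topology. -/

import Mathlib

open MeasureTheory Filter Topology Ordinal

/-- Integration of a function against a signed measure, via the Jordan decomposition. -/
noncomputable def sInt {K : Type*} [MeasurableSpace K] (μ : SignedMeasure K) (f : K → ℝ) : ℝ :=
  (∫ x, f x ∂μ.toJordanDecomposition.posPart) - ∫ x, f x ∂μ.toJordanDecomposition.negPart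

/-- Weak* convergence of a sequence of signed measures on `K`, tested against `C(K, ℝ)`. -/
def wsTendsto {K : Type*} [TopologicalSpace K] [MeasurableSpace K]
    (μs : ℕ → SignedMeasure K) (μ : SignedMeasure K) : Prop :=
  ∀ f : C(K, ℝ), Tendsto (fun n => sInt (μs n) f) atTop (𝓝 (sInt μ f))

/-- The weak* topology on signed measures, induced by testing against `C(K, ℝ)`. -/
noncomputable instance weakStarTop (K : Type*) [TopologicalSpace K] [MeasurableSpace K] :
    TopologicalSpace (SignedMeasure K) :=
  TopologicalSpace.induced (fun μ (f : C(K, ℝ)) => sInt μ f) Pi.topologicalSpace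

/-- The Wolfe sets `P_α(ε, B)` of the paper (Definition 3). -/
noncomputable def wolfeP {K : Type*} [TopologicalSpace K] [MeasurableSpace K]
    (ε : ℝ) (B : Set (SignedMeasure K)) (o : Ordinal) : Set (SignedMeasure K × Set K) :=
  Ordinal.limitRecOn o
    {p | p.1 ∈ B ∧ IsOpen p.2 ∧ ε ≤ ((p.1.totalVariation) p.2).toReal}
    (fun _ Pa =>
      {p | (p.1 ∈ B ∧ IsOpen p.2 ∧ ε ≤ ((p.1.totalVariation) p.2).toReal) ∧
        ∃ (μs : ℕ → SignedMeasure K) (Gs : ℕ → Set K),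
          (∀ n, (μs n, Gs n) ∈ Pa) ∧ wsTendsto μs p.1 ∧
          Pairwise (Function.onFun Disjoint Gs) ∧ closure (⋃ n, Gs n) ⊆ p.2})
    (fun o _ ih =>
      {p | (p.1 ∈ B ∧ IsOpen p.2 ∧ ε ≤ ((p.1.totalVariation) p.2).toReal) ∧
        ∃ (αs : ℕ → Ordinal) (h : ∀ n, αs n < o) (μs : ℕ → SignedMeasure K) (Gs : ℕ → Set K),
          StrictMono αs ∧ (⨆ n, αs n) = o ∧
          (∀ n, (μs n, Gs n) ∈ ih (αs n) (h n)) ∧ wsTendsto μs p.1 ∧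
          Pairwise (Function.onFun Disjoint Gs) ∧ closure (⋃ n, Gs n) ⊆ p.2})

/-- The `o`-th Cantor–Bendixson derived set of `A`. -/
noncomputable def cbIter {X : Type*} [TopologicalSpace X] (A : Set X) (o : Ordinal) : Set X :=
  Ordinal.limitRecOn o A (fun _ S => {x | AccPt x (Filter.principal S)})
    (fun o _ ih => ⋂ i : {b : Ordinal // b < o}, ih i.1 i.2)

set_option linter.unusedSectionVars false

section Aux

variable {K : Type*} [TopologicalSpace K] [MeasurableSpace K]
  {ε : ℝ} {B : Set (SignedMeasure K)}

theorem wolfeP_zero (ε : ℝ) (B : Set (SignedMeasure K)) :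
    wolfeP ε B 0 = {p | p.1 ∈ B ∧ IsOpen p.2 ∧ ε ≤ ((p.1.totalVariation) p.2).toReal} := by
  rw [wolfeP, Ordinal.limitRecOn_zero]

theorem wolfeP_succ (ε : ℝ) (B : Set (SignedMeasure K)) (o : Ordinal) :
    wolfeP ε B (Order.succ o) =
      {p | (p.1 ∈ B ∧ IsOpen p.2 ∧ ε ≤ ((p.1.totalVariation) p.2).toReal) ∧
        ∃ (μs : ℕ → SignedMeasure K) (Gs : ℕ → Set K),
          (∀ n, (μs n, Gs n) ∈ wolfeP ε B o) ∧ wsTendsto μs p.1 ∧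
          Pairwise (Function.onFun Disjoint Gs) ∧ closure (⋃ n, Gs n) ⊆ p.2} := by
  rw [wolfeP, Ordinal.limitRecOn_succ]; rfl

theorem wolfeP_limit (ε : ℝ) (B : Set (SignedMeasure K)) {o : Ordinal} (ho : Order.IsSuccLimit o) :
    wolfeP ε B o =
      {p | (p.1 ∈ B ∧ IsOpen p.2 ∧ ε ≤ ((p.1.totalVariation) p.2).toReal) ∧
        ∃ (αs : ℕ → Ordinal) (_ : ∀ n, αs n < o) (μs : ℕ → SignedMeasure K) (Gs : ℕ → Set K),
          StrictMono αs ∧ (⨆ n, αs n) = o ∧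
          (∀ n, (μs n, Gs n) ∈ wolfeP ε B (αs n)) ∧ wsTendsto μs p.1 ∧
          Pairwise (Function.onFun Disjoint Gs) ∧ closure (⋃ n, Gs n) ⊆ p.2} := by
  rw [wolfeP, Ordinal.limitRecOn_limit _ _ _ _ ho]; rfl

theorem wolfeP_base (ε : ℝ) (B : Set (SignedMeasure K)) (o : Ordinal) :
    wolfeP ε B o ⊆ {p | p.1 ∈ B ∧ IsOpen p.2 ∧ ε ≤ ((p.1.totalVariation) p.2).toReal} := by
  rcases Ordinal.zero_or_succ_or_isSuccLimit o with rfl | ⟨a, rfl⟩ | h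
  · rw [wolfeP_zero]
  · rw [wolfeP_succ]; exact fun p hp => hp.1
  · rw [wolfeP_limit ε B h]; exact fun p hp => hp.1

theorem pairwise_shift {Gs : ℕ → Set K} (h : Pairwise (Function.onFun Disjoint Gs)) (k : ℕ) :
    Pairwise (Function.onFun Disjoint fun n => Gs (n + k)) := fun i j hij =>
  h (by omega : i + k ≠ j + k)

theorem wsTendsto_shift {μs : ℕ → SignedMeasure K} {l : SignedMeasure K}
    (h : wsTendsto μs l) (k : ℕ) : wsTendsto (fun n => μs (n + k)) l := fun f =>
  (h f).comp (tendsto_add_atTop_nat k)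

/-- Monotonicity of the Wolfe sets. -/
theorem wolfeP_anti (ε : ℝ) (B : Set (SignedMeasure K)) :
    ∀ α' α, α ≤ α' → wolfeP ε B α' ⊆ wolfeP ε B α := by
  intro α'
  induction α' using Ordinal.induction with
  | h α' IH =>
  intro α hα p hp
  rcases eq_or_lt_of_le hα with rfl | hlt
  · exact hp
  rcases Ordinal.zero_or_succ_or_isSuccLimit α' with rfl | ⟨δ, rfl⟩ | hlim
  · exact absurd hlt (by simp)
  · -- α' = succ δ
    have hαδ : α ≤ δ := Order.lt_succ_iff.mp hlt
    rw [wolfeP_succ] at hp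
    obtain ⟨hbase, μs, Gs, hmem, htend, hdis, hcl⟩ := hp
    rcases Ordinal.zero_or_succ_or_isSuccLimit α with rfl | ⟨ρ, rfl⟩ | hal
    · rw [wolfeP_zero]; exact hbase
    · rw [wolfeP_succ]
      exact ⟨hbase, μs, Gs,
        fun n => IH δ (Order.lt_succ δ) ρ (le_of_lt (Order.succ_le_iff.mp hαδ)) (hmem n),
        htend, hdis, hcl⟩
    · -- α limit ≤ δ : get cofinal sequence from nonemptiness of wolfeP ε B α
      have h0 : (μs 0, Gs 0) ∈ wolfeP ε B α := IH δ (Order.lt_succ δ) α hαδ (hmem 0)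
      rw [wolfeP_limit ε B hal] at h0
      obtain ⟨-, βs, hβlt, -, -, hβmono, hβsup, -⟩ := h0
      rw [wolfeP_limit ε B hal]
      refine ⟨hbase, βs, hβlt, μs, Gs, hβmono, hβsup,
        fun n => IH δ (Order.lt_succ δ) (βs n) (le_of_lt (lt_of_lt_of_le (hβlt n) hαδ)) (hmem n),
        htend, hdis, hcl⟩
  · -- α' limit
    rw [wolfeP_limit ε B hlim] at hp
    obtain ⟨hbase, αs, hαlt, μs, Gs, hmono, hsup, hmem, htend, hdis, hcl⟩ := hp
    -- find k with α ≤ αs k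
    have hk : ∃ k, α ≤ αs k := by
      by_contra hcon
      push_neg at hcon
      have : (⨆ n, αs n) ≤ α := ciSup_le fun n => le_of_lt (hcon n)
      rw [hsup] at this
      exact absurd (lt_of_lt_of_le hlt this) (lt_irrefl α)
    obtain ⟨k, hk⟩ := hk
    have hshift : ∀ n, α ≤ αs (n + k) := fun n =>
      le_trans hk (hmono.monotone (by omega))
    have hclshift : closure (⋃ n, Gs (n + k)) ⊆ p.2 :=
      subset_trans (closure_mono (Set.iUnion_subset fun n => Set.subset_iUnion Gs (n + k))) hcl
    rcases Ordinal.zero_or_succ_or_isSuccLimit α with rfl | ⟨ρ, rfl⟩ | hal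
    · rw [wolfeP_zero]; exact hbase
    · rw [wolfeP_succ]
      refine ⟨hbase, fun n => μs (n + k), fun n => Gs (n + k),
        fun n => IH (αs (n + k)) (hαlt _) ρ (le_of_lt (Order.succ_le_iff.mp (hshift n)))
          (hmem (n + k)),
        wsTendsto_shift htend k, pairwise_shift hdis k, hclshift⟩
    · have h0 : (μs k, Gs k) ∈ wolfeP ε B α := IH (αs k) (hαlt k) α hk (hmem k)
      rw [wolfeP_limit ε B hal] at h0
      obtain ⟨-, βs, hβlt, -, -, hβmono, hβsup, -⟩ := h0
      rw [wolfeP_limit ε B hal]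
      refine ⟨hbase, βs, hβlt, fun n => μs (n + k), fun n => Gs (n + k), hβmono, hβsup,
        fun n => IH (αs (n + k)) (hαlt _) (βs n)
          (le_of_lt (lt_of_lt_of_le (hβlt n) (hshift n))) (hmem (n + k)),
        wsTendsto_shift htend k, pairwise_shift hdis k, hclshift⟩

theorem wsTendsto_iff {μs : ℕ → SignedMeasure K} {l : SignedMeasure K} :
    wsTendsto μs l ↔ Tendsto μs atTop (𝓝 l) := by
  have h : 𝓝 l = comap (fun μ (f : C(K, ℝ)) => sInt μ f) (𝓝 (fun f => sInt l f)) :=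
    nhds_induced _ l
  rw [h, tendsto_comap_iff]
  rw [show ((fun μ (f : C(K, ℝ)) => sInt μ f) ∘ μs) = fun n (f : C(K, ℝ)) => sInt (μs n) f
    from rfl, tendsto_pi_nhds]
  rfl

end Aux

/-- The measures appearing at stage `γ + η` of the Wolfe sets lie in the `η`-th weak*
derived set of the measures appearing at stage `γ`. -/
theorem stmt12 {K : Type*} [TopologicalSpace K] [CompactSpace K] [T2Space K]
    [MeasurableSpace K] [BorelSpace K]
    (ε : ℝ) (hε : 0 < ε) (L : Set (SignedMeasure K)) (γ η : Ordinal) :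
    {l : SignedMeasure K | ∃ G, (l, G) ∈ wolfeP ε L (γ + η)} ⊆
      cbIter {l : SignedMeasure K | ∃ G, (l, G) ∈ wolfeP ε L γ} η := by
  induction η using Ordinal.limitRecOn with
  | zero => rw [add_zero, cbIter, Ordinal.limitRecOn_zero]
  | add_one β IHβ =>
    intro l hl
    obtain ⟨G, hG⟩ := hl
    rw [← add_assoc, ← Order.succ_eq_add_one, wolfeP_succ] at hG
    obtain ⟨hbase, μs, Gs, hmem, htend, hdis, hcl⟩ := hG
    set S := cbIter {l : SignedMeasure K | ∃ G, (l, G) ∈ wolfeP ε L γ} β with hS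
    have hμS : ∀ n, μs n ∈ S := fun n => IHβ ⟨Gs n, hmem n⟩
    rw [cbIter, Ordinal.limitRecOn_add_one]
    show AccPt l (𝓟 S)
    -- only finitely many n with μs n = l
    have hfin : {n | μs n = l}.Finite := by
      by_contra hinf
      have hinf' : {n | μs n = l}.Infinite := hinf
      haveI := hinf'.to_subtype
      haveI : IsFiniteMeasure l.totalVariation :=
        inferInstanceAs (IsFiniteMeasure
          (l.toJordanDecomposition.posPart + l.toJordanDecomposition.negPart))
      have hGopen : ∀ n, IsOpen (Gs n) := fun n => (wolfeP_base ε L _ (hmem n)).2.1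
      have hle : ∀ n : {n | μs n = l}, ENNReal.ofReal ε ≤ l.totalVariation (Gs n) := by
        rintro ⟨n, hn⟩
        have := (wolfeP_base ε L _ (hmem n)).2.2
        rw [hn] at this
        exact ENNReal.ofReal_le_of_le_toReal this
      have htop : (⊤ : ENNReal) ≤ l.totalVariation (⋃ n : {n | μs n = l}, Gs n) := by
        have hdisj : Pairwise (Function.onFun Disjoint fun n : {n | μs n = l} => Gs n) :=
          fun i j hij => hdis fun h => hij (Subtype.ext h)
        rw [measure_iUnion hdisj fun n : {n | μs n = l} => (hGopen n).measurableSet]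
        calc (⊤ : ENNReal) = ∑' _ : {n | μs n = l}, ENNReal.ofReal ε :=
              (ENNReal.tsum_const_eq_top_of_ne_zero (ENNReal.ofReal_pos.mpr hε).ne').symm
          _ ≤ _ := ENNReal.tsum_le_tsum hle
      exact absurd (top_le_iff.mp htop ▸ measure_ne_top l.totalVariation _)
        (by simp [top_le_iff.mp htop])
    have hev : ∀ᶠ n in atTop, μs n ∈ S \ {l} := by
      have : ∀ᶠ n in atTop, μs n ≠ l := by
        rw [← Nat.cofinite_eq_atTop]
        exact hfin.eventually_cofinite_notMem
      exact this.mono fun n hn => ⟨hμS n, hn⟩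
    have hconv : Tendsto μs atTop (𝓝 l) := wsTendsto_iff.mp htend
    have hclmem : l ∈ closure (S \ {l}) :=
      mem_closure_of_frequently_of_tendsto hev.frequently hconv
    rw [accPt_iff_clusterPt, inf_principal, Set.inter_comm, ← Set.diff_eq]
    exact mem_closure_iff_clusterPt.mp hclmem
  | limit β hβ IHβ =>
    intro l hl
    rw [cbIter, Ordinal.limitRecOn_limit _ _ _ _ hβ]
    refine Set.mem_iInter.mpr fun ⟨b, hb⟩ => ?_
    obtain ⟨G, hG⟩ := hl
    have : (l, G) ∈ wolfeP ε L (γ + b) :=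
      wolfeP_anti ε L (γ + β) (γ + b) (add_le_add_right hb.le γ) hG
    exact IHβ b hb ⟨G, this⟩
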